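/- Let C = a·(M+1)·(e^{aL}·(1 + aL) − 1)/4. For every m ∈ ℕ and every k ∈ ℕ with k ≤ 2^m, the sequence n ↦ X^{m+n}_{2^n·k} of Euler approximations at the dyadic point d = a·k/2^m converges to some real number x_d, and moreover |X^{m+n}_{2^n·k} − x_d| ≤ C/2^{m+n−1} for all n ∈ ℕ (so the convergence is uniform over all dyadic points). -/

import Mathlib

open Filter Topology Set


lemma euler_bdd (a M x₀ : ℝ) (ha : 0 < a) (hM : 0 < M)
    (U : Set (ℝ × ℝ)) (hU : U = Set.Icc (0:ℝ) a ×ˢ Set.Icc (x₀ - M*a) (x₀ + M*a))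
    (f : ℝ × ℝ → ℝ) (hf_bdd : ∀ u ∈ U, |f u| ≤ M)
    (X : ℕ → ℕ → ℝ) (hX0 : ∀ m, X m 0 = x₀)
    (hXs : ∀ m k, X m (k+1) = X m k + a / 2^m * f (a * k / 2^m, X m k)) :
    ∀ m k, k ≤ 2^m → |X m k - x₀| ≤ M * (a * k / 2^m) := by
  intro m k
  induction k with
  | zero => intro _; simp [hX0]
  | succ k ih =>
    intro hk
    have hk' : k ≤ 2^m := le_of_lt hk
    have hb := ih hk'
    have h2 : (0:ℝ) < 2^m := by positivity
    have hka : (k:ℝ) ≤ 2^m := by exact_mod_cast hk'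
    have hmem : (a * k / 2^m, X m k) ∈ U := by
      rw [hU]
      constructor
      · constructor
        · positivity
        · rw [div_le_iff₀ h2]
          nlinarith
      · have : M * (a * k / 2^m) ≤ M * a := by
          apply mul_le_mul_of_nonneg_left _ hM.le
          rw [div_le_iff₀ h2]; nlinarith
        have := abs_le.mp (hb.trans this)
        constructor <;> simp <;> linarith [this.1, this.2]
    have hfb := hf_bdd _ hmem
    rw [hXs]
    calc |X m k + a/2^m * f (a*k/2^m, X m k) - x₀|
        ≤ |X m k - x₀| + |a/2^m * f (a*k/2^m, X m k)| := by
          rw [add_sub_right_comm]; exact abs_add_le _ _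
      _ ≤ M * (a * k / 2^m) + a/2^m * M := by
          gcongr
          rw [abs_mul, abs_of_pos (by positivity)]
          gcongr
      _ = M * (a * ((k+1:ℕ):ℝ) / 2^m) := by push_cast; field_simp
    
lemma euler_mem (a M x₀ : ℝ) (ha : 0 < a) (hM : 0 < M)
    (U : Set (ℝ × ℝ)) (hU : U = Set.Icc (0:ℝ) a ×ˢ Set.Icc (x₀ - M*a) (x₀ + M*a))
    (f : ℝ × ℝ → ℝ) (hf_bdd : ∀ u ∈ U, |f u| ≤ M)
    (X : ℕ → ℕ → ℝ) (hX0 : ∀ m, X m 0 = x₀)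
    (hXs : ∀ m k, X m (k+1) = X m k + a / 2^m * f (a * k / 2^m, X m k)) :
    ∀ m (k : ℕ), k ≤ 2^m → (a * k / 2^m, X m k) ∈ U := by
  intro m k hk
  have hb := euler_bdd a M x₀ ha hM U hU f hf_bdd X hX0 hXs m k hk
  have h2 : (0:ℝ) < 2^m := by positivity
  have hka : (k:ℝ) ≤ 2^m := by exact_mod_cast hk
  rw [hU]
  constructor
  · constructor
    · positivity
    · rw [div_le_iff₀ h2]; nlinarith
  · have : M * (a * k / 2^m) ≤ M * a := by
      apply mul_le_mul_of_nonneg_left _ hM.le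
      rw [div_le_iff₀ h2]; nlinarith
    have := abs_le.mp (hb.trans this)
    constructor <;> simp <;> linarith [this.1, this.2]


lemma euler_refine (a M L x₀ : ℝ) (ha : 0 < a) (hM : 0 < M) (hL : 0 < L)
    (U : Set (ℝ × ℝ)) (hU : U = Set.Icc (0:ℝ) a ×ˢ Set.Icc (x₀ - M*a) (x₀ + M*a))
    (f : ℝ × ℝ → ℝ)
    (hf_lip : ∀ u ∈ U, ∀ v ∈ U, |f u - f v| ≤ L * (|u.1 - v.1| + |u.2 - v.2|))
    (hf_bdd : ∀ u ∈ U, |f u| ≤ M)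
    (X : ℕ → ℕ → ℝ) (hX0 : ∀ m, X m 0 = x₀)
    (hXs : ∀ m k, X m (k+1) = X m k + a / 2^m * f (a * k / 2^m, X m k)) :
    ∀ m (k : ℕ), k ≤ 2^m →
      |X (m+1) (2*k) - X m k| ≤ a*(M+1)*(Real.exp (a*L) - 1) / 4 / 2^m := by
  have hmem := euler_mem a M x₀ ha hM U hU f hf_bdd X hX0 hXs
  intro m k hk
  have h2 : (0:ℝ) < 2^m := by positivity
  set h : ℝ := a / 2^m with hh
  have hhpos : 0 < h := by positivity
  have key : ∀ k : ℕ, k ≤ 2^m →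
      |X (m+1) (2*k) - X m k| ≤ h*(M+1)/4 * ((1+h*L)^k - 1) := by
    intro k
    induction k with
    | zero => intro _; simp [hX0]
    | succ k ih =>
      intro hk1
      have hk' : k ≤ 2^m := le_of_lt hk1
      have hd := ih hk'
      -- notation
      set t : ℝ := a * k / 2^m with ht
      set x : ℝ := X m k
      set Y : ℝ := X (m+1) (2*k)
      set Y' : ℝ := X (m+1) (2*k+1)
      have memx : (t, x) ∈ U := hmem m k hk'
      have e1 : a * ((2*k : ℕ):ℝ) / 2^(m+1) = t := by push_cast; rw [ht]; ring
      have e2 : a / 2^(m+1) = h/2 := by rw [hh]; ring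
      have e3 : a * ((2*k+1 : ℕ):ℝ) / 2^(m+1) = t + h/2 := by
        push_cast; rw [ht, hh]; ring
      have memY : (t, Y) ∈ U := by
        have := hmem (m+1) (2*k) (by omega)
        rwa [e1] at this
      have memY' : (t + h/2, Y') ∈ U := by
        have := hmem (m+1) (2*k+1) (by rw [pow_succ]; omega)
        rwa [e3] at this
      have sY' : Y' = Y + h/2 * f (t, Y) := by
        have := hXs (m+1) (2*k); rwa [e1, e2] at this
      have sY'' : X (m+1) (2*(k+1)) = Y' + h/2 * f (t + h/2, Y') := by
        have := hXs (m+1) (2*k+1)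
        rw [e3, e2] at this
        rw [show 2*(k+1) = (2*k+1)+1 by ring, this]
      have sx : X m (k+1) = x + h * f (t, x) := hXs m k
      -- bounds
      have lip1 : |f (t, Y) - f (t, x)| ≤ L * |Y - x| := by
        have := hf_lip (t, Y) memY (t, x) memx
        simpa using this
      have lip2 : |f (t + h/2, Y') - f (t, x)| ≤ L * (h/2 + |Y' - x|) := by
        have := hf_lip (t + h/2, Y') memY' (t, x) memx
        simp only at this
        have habs : |t + h/2 - t| = h/2 := by rw [show t + h/2 - t = h/2 by ring]; exact abs_of_pos (by positivity)
        rw [habs] at this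
        exact this
      have bY' : |Y' - x| ≤ |Y - x| + h/2 * M := by
        rw [sY', add_sub_right_comm]
        refine (abs_add_le _ _).trans ?_
        gcongr
        rw [abs_mul, abs_of_pos (by positivity : (0:ℝ) < h/2)]
        gcongr
        exact hf_bdd _ memY
      have decomp : X (m+1) (2*(k+1)) - X m (k+1)
          = (Y - x) + h/2 * (f (t, Y) - f (t, x)) + h/2 * (f (t + h/2, Y') - f (t, x)) := by
        rw [sY'', sY', sx]; ring
      have step : |X (m+1) (2*(k+1)) - X m (k+1)|
          ≤ (1 + h*L) * |Y - x| + h^2*L*(M+1)/4 := by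
        rw [decomp]
        have habs2 : |h/2 * (f (t, Y) - f (t, x))| ≤ h/2 * (L * |Y - x|) := by
          rw [abs_mul, abs_of_pos (by positivity : (0:ℝ) < h/2)]; gcongr
        have habs3 : |h/2 * (f (t + h/2, Y') - f (t, x))| ≤ h/2 * (L * (h/2 + (|Y - x| + h/2*M))) := by
          rw [abs_mul, abs_of_pos (by positivity : (0:ℝ) < h/2)]
          gcongr
          exact lip2.trans (by gcongr)
        calc |(Y - x) + h/2 * (f (t, Y) - f (t, x)) + h/2 * (f (t + h/2, Y') - f (t, x))|
            ≤ |(Y - x) + h/2 * (f (t, Y) - f (t, x))| + |h/2 * (f (t + h/2, Y') - f (t, x))| := abs_add_le _ _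
          _ ≤ (|Y - x| + |h/2 * (f (t, Y) - f (t, x))|) + |h/2 * (f (t + h/2, Y') - f (t, x))| := by
              gcongr; exact abs_add_le _ _
          _ ≤ (|Y - x| + h/2 * (L * |Y - x|)) + h/2 * (L * (h/2 + (|Y - x| + h/2*M))) := by gcongr
          _ = (1 + h*L) * |Y - x| + h^2*L*(M+1)/4 := by ring
      have hfac : (0:ℝ) ≤ 1 + h*L := by positivity
      calc |X (m+1) (2*(k+1)) - X m (k+1)|
          ≤ (1 + h*L) * |Y - x| + h^2*L*(M+1)/4 := step
        _ ≤ (1 + h*L) * (h*(M+1)/4 * ((1+h*L)^k - 1)) + h^2*L*(M+1)/4 := by gcongr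
        _ = h*(M+1)/4 * ((1+h*L)^(k+1) - 1) := by ring
  have hexp : (1+h*L)^k ≤ Real.exp (a*L) := by
    have h1 : (1+h*L) ≤ Real.exp (h*L) := by
      have := Real.add_one_le_exp (h*L); linarith
    have h2' : (1+h*L)^k ≤ Real.exp (h*L)^k :=
      pow_le_pow_left₀ (by positivity) h1 k
    rw [← Real.exp_nat_mul] at h2'
    refine h2'.trans (Real.exp_le_exp.mpr ?_)
    have hka : (k:ℝ) ≤ 2^m := by exact_mod_cast hk
    calc (k:ℝ) * (h*L) = (↑k/2^m) * (a*L) := by rw [hh]; ring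
      _ ≤ 1 * (a*L) := by
          gcongr
          exact (div_le_one h2).mpr hka
      _ = a*L := one_mul _
  calc |X (m+1) (2*k) - X m k| ≤ h*(M+1)/4 * ((1+h*L)^k - 1) := key k hk
    _ ≤ h*(M+1)/4 * (Real.exp (a*L) - 1) := by gcongr
    _ = a*(M+1)*(Real.exp (a*L) - 1) / 4 / 2^m := by rw [hh]; ring

/-- With C = a·(M+1)·(e^{aL}·(1+aL) − 1)/4, for every m and k ≤ 2^m the
sequence n ↦ X^{m+n}_{2^n·k} converges to some x_d, with
|X^{m+n}_{2^n·k} − x_d| ≤ C/2^{m+n−1} for all n (uniform over dyadic points). -/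
theorem euler_dyadic_convergence
    (a M L x₀ : ℝ) (ha : 0 < a) (hM : 0 < M) (hL : 0 < L)
    (U : Set (ℝ × ℝ))
    (hU : U = Set.Icc (0 : ℝ) a ×ˢ Set.Icc (x₀ - M * a) (x₀ + M * a))
    (f : ℝ × ℝ → ℝ)
    (hf_lip : ∀ u ∈ U, ∀ v ∈ U, |f u - f v| ≤ L * (|u.1 - v.1| + |u.2 - v.2|))
    (hf_bdd : ∀ u ∈ U, |f u| ≤ M)
    (X : ℕ → ℕ → ℝ)
    (hX0 : ∀ m, X m 0 = x₀)
    (hXs : ∀ m k, X m (k + 1) = X m k + a / 2 ^ m * f (a * k / 2 ^ m, X m k))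
    (C : ℝ) (hC : C = a * (M + 1) * (Real.exp (a * L) * (1 + a * L) - 1) / 4) :
    ∀ m k : ℕ, k ≤ 2 ^ m →
      ∃ xd : ℝ, Tendsto (fun n : ℕ => X (m + n) (2 ^ n * k)) atTop (𝓝 xd) ∧
        ∀ n : ℕ, |X (m + n) (2 ^ n * k) - xd| ≤ C / (2 : ℝ) ^ ((m : ℤ) + (n : ℤ) - 1) := by
  have hrefine := euler_refine a M L x₀ ha hM hL U hU f hf_lip hf_bdd X hX0 hXs
  intro m k hk
  set D : ℝ := a*(M+1)*(Real.exp (a*L) - 1)/4 with hD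
  set g : ℕ → ℝ := fun n => X (m+n) (2^n * k) with hg
  have hstep : ∀ n, dist (g n) (g (n+1)) ≤ (D/2^m) * (1/2)^n := by
    intro n
    have hidx : 2^n * k ≤ 2^(m+n) := by
      calc 2^n * k ≤ 2^n * 2^m := Nat.mul_le_mul_left _ hk
        _ = 2^(m+n) := by rw [← pow_add, Nat.add_comm]
    have hb := hrefine (m+n) (2^n * k) hidx
    have e : g (n+1) = X ((m+n)+1) (2*(2^n * k)) := by
      simp only [hg]
      rw [show 2^(n+1)*k = 2*(2^n*k) from by rw [pow_succ]; ring]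
      rfl
    have e2 : g n = X (m+n) (2^n * k) := rfl
    rw [dist_comm, Real.dist_eq, e, e2]
    refine hb.trans (le_of_eq ?_)
    rw [pow_add]
    field_simp
    rw [mul_assoc, ← mul_pow]; norm_num
  obtain ⟨xd, hxd⟩ := cauchySeq_tendsto_of_complete
    (cauchySeq_of_le_geometric (1/2) (D/2^m) (by norm_num) hstep)
  refine ⟨xd, hxd, fun n => ?_⟩
  have hdist := dist_le_of_le_geometric_of_tendsto (1/2) (D/2^m) (by norm_num) hstep hxd n
  rw [Real.dist_eq] at hdist
  refine hdist.trans ?_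
  have hpow : (0:ℝ) < 2^(m+n) := by positivity
  have hz : (2:ℝ)^((m:ℤ)+(n:ℤ)-1) = 2^(m+n) / 2 := by
    rw [zpow_sub₀ (two_ne_zero), zpow_one]
    congr 1
  have hDC : D ≤ C := by
    have h1 : D + a*(M+1)*(Real.exp (a*L)*(a*L))/4 = C := by rw [hD, hC]; ring
    have h2 : (0:ℝ) ≤ a*(M+1)*(Real.exp (a*L)*(a*L))/4 := by positivity
    linarith
  calc D/2^m*(1/2)^n/(1-1/2) = 2*D/2^(m+n) := by rw [pow_add]; field_simp; rw [mul_assoc, ← mul_pow]; norm_num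
    _ ≤ 2*C/2^(m+n) := by gcongr
    _ = C / ((2:ℝ)^(m+n)/2) := by field_simp
    _ = C / 2^((m:ℤ)+(n:ℤ)-1) := by rw [hz]
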